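/- Let p be a prime, B a group, and A a normal subgroup of B isomorphic to ℤ², written additively with basis {e₁, e₂}. Suppose that [B,e₁] ⊆ pA and [B,e₂] ⊆ ℤe₁ + pA (i.e. the conjugation action of B on A/pA is by upper unitriangular matrices with respect to this basis). Then Γ^{2k}A ⊆ p^kA for every k ≥ 1, and hence ⋂_{k≥1} Γ^kA = 0. -/

import Mathlib

/-- The subgroup of `m`-th powers (written additively: `m`-th multiples) of elements of `A`. -/
def powSubgroup {B : Type*} [Group B] (A : Subgroup B) (m : ℕ) : Subgroup B :=
  Subgroup.closure {x : B | ∃ a ∈ A, x = a ^ m}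

/-- `gammaSeries p A k` is the subgroup `Γ^{k+1}A` of the paper: `Γ¹A = [B,A]·(pA)` and
`Γ^{k+1}A = [B,Γ^kA]·(p^{k+1}A)`. (Indices are shifted: `gammaSeries p A k = Γ^{k+1}A`.) -/
def gammaSeries {B : Type*} [Group B] (p : ℕ) (A : Subgroup B) : ℕ → Subgroup B
  | 0 => ⁅(⊤ : Subgroup B), A⁆ ⊔ powSubgroup A p
  | k + 1 => ⁅(⊤ : Subgroup B), gammaSeries p A k⁆ ⊔ powSubgroup A (p ^ (k + 2))

section Aux
variable {B : Type*} [Group B] {A : Subgroup B}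

/-- coordinates of an element of `A`. -/
def co (e : A ≃* Multiplicative (ℤ × ℤ)) (a : A) : ℤ × ℤ := Multiplicative.toAdd (e a)

variable (e : A ≃* Multiplicative (ℤ × ℤ))

lemma co_one : co e 1 = 0 := by simp [co]
lemma co_mul (a b : A) : co e (a * b) = co e a + co e b := by simp [co]
lemma co_inv (a : A) : co e a⁻¹ = -co e a := by simp [co]
lemma co_zpow (a : A) (n : ℤ) : co e (a ^ n) = n • co e a := by simp [co]
lemma co_pow (a : A) (n : ℕ) : co e (a ^ n) = (n : ℤ) • co e a := by simp [co]

lemma co_inj {a b : A} (h : co e a = co e b) : a = b := by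
  apply e.injective; simpa [co] using h

/-- conjugation by `b` as a monoid hom `A →* A`. -/
def conjHom (hA : A.Normal) (b : B) : A →* A where
  toFun a := ⟨b * ↑a * b⁻¹, hA.conj_mem a a.2 b⟩
  map_one' := by ext; simp
  map_mul' a a' := by ext; push_cast; group

/-- `conjA hA b a = [b, a]` as an element of `A`. -/
def conjA (hA : A.Normal) (b : B) (a : A) : A := conjHom hA b a * a⁻¹

lemma conjA_coe (hA : A.Normal) (b : B) (a : A) :
    (↑(conjA hA b a) : B) = b * ↑a * b⁻¹ * (↑a : B)⁻¹ := by
  simp [conjA, conjHom]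

variable {e₁ e₂ : A} (he₁ : e e₁ = Multiplicative.ofAdd ((1, 0) : ℤ × ℤ))
  (he₂ : e e₂ = Multiplicative.ofAdd ((0, 1) : ℤ × ℤ))

include he₁ he₂ in
lemma rep (a : A) : a = e₁ ^ (co e a).1 * e₂ ^ (co e a).2 := by
  apply co_inj e
  have h1 : co e e₁ = (1, 0) := by simp [co, he₁]
  have h2 : co e e₂ = (0, 1) := by simp [co, he₂]
  rw [co_mul, co_zpow, co_zpow, h1, h2]
  ext <;> simp

include he₁ he₂ in
lemma co_conjA (hA : A.Normal) (b : B) (a : A) :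
    co e (conjA hA b a) =
      (co e a).1 • co e (conjA hA b e₁) + (co e a).2 • co e (conjA hA b e₂) := by
  have key : ∀ c : A, co e (conjA hA b c) = co e (conjHom hA b c) - co e c := by
    intro c; rw [conjA, co_mul, co_inv, sub_eq_add_neg]
  have hrep := rep e he₁ he₂ a
  have h1 : co e e₁ = (1, 0) := by simp [co, he₁]
  have h2 : co e e₂ = (0, 1) := by simp [co, he₂]
  have hhom : co e (conjHom hA b a) =
      (co e a).1 • co e (conjHom hA b e₁) + (co e a).2 • co e (conjHom hA b e₂) := by
    conv_lhs => rw [hrep]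
    rw [map_mul, map_zpow, map_zpow, co_mul, co_zpow, co_zpow]
  set x := (co e a).1 with hx
  set y := (co e a).2 with hy
  have hco : x • co e e₁ + y • co e e₂ = co e a := by
    rw [h1, h2]; ext <;> simp [hx, hy]
  rw [key, key, key, hhom, ← hco]
  simp only [smul_sub]
  abel

/-- The "grid" subgroup: elements of `A` whose first coordinate is divisible by `s`
and second coordinate divisible by `t`. -/
def grid (s t : ℕ) : Subgroup B where
  carrier := {x | ∃ a : A, x = ↑a ∧ (s : ℤ) ∣ (co e a).1 ∧ (t : ℤ) ∣ (co e a).2}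
  one_mem' := ⟨1, by simp, by simp [co_one], by simp [co_one]⟩
  mul_mem' := by
    rintro x y ⟨a, rfl, d1, d2⟩ ⟨a', rfl, d1', d2'⟩
    exact ⟨a * a', by push_cast; ring,
      by rw [co_mul]; exact dvd_add d1 d1', by rw [co_mul]; exact dvd_add d2 d2'⟩
  inv_mem' := by
    rintro x ⟨a, rfl, d1, d2⟩
    exact ⟨a⁻¹, by push_cast; ring,
      by rw [co_inv]; exact (dvd_neg).2 d1, by rw [co_inv]; exact (dvd_neg).2 d2⟩

lemma coe_mem_grid {s t : ℕ} {a : A} (h : (↑a : B) ∈ grid e s t) :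
    (s : ℤ) ∣ (co e a).1 ∧ (t : ℤ) ∣ (co e a).2 := by
  obtain ⟨a', ha', d1, d2⟩ := h
  obtain rfl : a = a' := Subtype.coe_injective ha'
  exact ⟨d1, d2⟩

lemma grid_mono {s t s' t' : ℕ} (h1 : s' ∣ s) (h2 : t' ∣ t) : grid e s t ≤ grid e s' t' := by
  rintro x ⟨a, rfl, d1, d2⟩
  exact ⟨a, rfl, dvd_trans (Int.natCast_dvd_natCast.2 h1) d1,
    dvd_trans (Int.natCast_dvd_natCast.2 h2) d2⟩

lemma pow_le_grid (m : ℕ) : powSubgroup A m ≤ grid e m m := by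
  rw [powSubgroup]
  apply (Subgroup.closure_le _).2
  rintro x ⟨a, ha, rfl⟩
  refine ⟨(⟨a, ha⟩ : A) ^ m, by push_cast; ring, ?_, ?_⟩ <;>
    rw [co_pow] <;> exact Dvd.intro _ rfl

lemma grid_le_pow (m : ℕ) : grid e m m ≤ powSubgroup A m := by
  rintro x ⟨a, rfl, ⟨u, hu⟩, ⟨v, hv⟩⟩
  set c := e.symm (Multiplicative.ofAdd (u, v)) with hc
  have hcc : co e c = (u, v) := by simp [co, hc]
  have hac : a = c ^ m := by
    apply co_inj e
    rw [co_pow, hcc]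
    ext
    · simpa using hu
    · simpa using hv
  have : (↑a : B) = (↑c : B) ^ m := by rw [hac]; push_cast; ring
  rw [this]
  exact Subgroup.subset_closure ⟨↑c, c.2, rfl⟩

end Aux

section Main
variable {B : Type*} [Group B] {A : Subgroup B} (p : ℕ)
variable (hA : A.Normal) (e : A ≃* Multiplicative (ℤ × ℤ)) {e₁ e₂ : A}
variable (he₁ : e e₁ = Multiplicative.ofAdd ((1, 0) : ℤ × ℤ))
variable (he₂ : e e₂ = Multiplicative.ofAdd ((0, 1) : ℤ × ℤ))
variable (h1 : ∀ b : B, b * ↑e₁ * b⁻¹ * (↑e₁ : B)⁻¹ ∈ powSubgroup A p)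
variable (h2 : ∀ b : B, b * ↑e₂ * b⁻¹ * (↑e₂ : B)⁻¹ ∈
      Subgroup.closure {(↑e₁ : B)} ⊔ powSubgroup A p)

open scoped commutatorElement in
include hA he₁ he₂ h1 h2 in
lemma comm_grid_le {s t u v : ℕ} (hu1 : u ∣ p * s) (hu2 : u ∣ t)
    (hv1 : v ∣ p * s) (hv2 : v ∣ p * t) :
    ⁅(⊤ : Subgroup B), grid e s t⁆ ≤ grid e u v := by
  rw [Subgroup.commutator_le]
  rintro b - x ⟨a, rfl, d1, d2⟩
  have hcoe : ⁅b, (↑a : B)⁆ = ↑(conjA hA b a) := by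
    rw [commutatorElement_def, conjA_coe]
  rw [hcoe]
  have hc1 : (p : ℤ) ∣ (co e (conjA hA b e₁)).1 ∧ (p : ℤ) ∣ (co e (conjA hA b e₁)).2 := by
    refine coe_mem_grid e (pow_le_grid e p ?_)
    rw [conjA_coe]; exact h1 b
  have hc2 : (p : ℤ) ∣ (co e (conjA hA b e₂)).2 := by
    have hm : (↑(conjA hA b e₂) : B) ∈ Subgroup.closure {(↑e₁ : B)} ⊔ powSubgroup A p := by
      rw [conjA_coe]; exact h2 b
    have hle : Subgroup.closure {(↑e₁ : B)} ⊔ powSubgroup A p ≤ grid e 1 p := by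
      refine sup_le ((Subgroup.closure_le _).2 ?_)
        ((pow_le_grid e p).trans (grid_mono e (one_dvd p) dvd_rfl))
      rintro x hx
      rw [Set.mem_singleton_iff] at hx
      subst hx
      refine ⟨e₁, rfl, one_dvd _, ?_⟩
      have : co e e₁ = (1, 0) := by simp [co, he₁]
      rw [this]; exact dvd_zero _
    exact (coe_mem_grid e (hle hm)).2
  have cast1 : ∀ {w s' : ℕ}, w ∣ p * s' → ((w : ℤ)) ∣ (s' : ℤ) * p := by
    intro w s' hw
    have : ((w : ℤ)) ∣ ((p * s' : ℕ) : ℤ) := Int.natCast_dvd_natCast.2 hw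
    rw [Nat.cast_mul] at this; rw [mul_comm]; exact this
  refine ⟨conjA hA b a, rfl, ?_, ?_⟩ <;>
    rw [co_conjA e he₁ he₂ hA b a] <;>
    simp only [Prod.fst_add, Prod.snd_add, Prod.smul_fst, Prod.smul_snd, smul_eq_mul]
  · refine dvd_add (dvd_trans (cast1 hu1) (mul_dvd_mul d1 hc1.1)) ?_
    exact dvd_trans (dvd_trans (Int.natCast_dvd_natCast.2 hu2) d2) (dvd_mul_right _ _)
  · exact dvd_add (dvd_trans (cast1 hv1) (mul_dvd_mul d1 hc1.2))
      (dvd_trans (cast1 hv2) (mul_dvd_mul d2 hc2))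



lemma gammaSeries_zero {B : Type*} [Group B] {A : Subgroup B} {p : ℕ} :
    gammaSeries p A 0 = ⁅(⊤ : Subgroup B), A⁆ ⊔ powSubgroup A p := rfl

lemma gammaSeries_succ {B : Type*} [Group B] {A : Subgroup B} {p : ℕ} (k : ℕ) :
    gammaSeries p A (k + 1) =
    ⁅(⊤ : Subgroup B), gammaSeries p A k⁆ ⊔ powSubgroup A (p ^ (k + 2)) := rfl

include hA he₁ he₂ h1 h2 in
lemma gamma_le : ∀ k : ℕ, gammaSeries p A (2 * k) ≤ grid e (p ^ k) (p ^ (k + 1)) ∧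
    gammaSeries p A (2 * k + 1) ≤ grid e (p ^ (k + 1)) (p ^ (k + 1)) := by
  intro k
  induction k with
  | zero =>
    have hA_le : A ≤ grid e 1 1 := fun x hx => ⟨⟨x, hx⟩, rfl, one_dvd _, one_dvd _⟩
    have G0 : gammaSeries p A (2 * 0) ≤ grid e (p ^ 0) (p ^ (0 + 1)) := by
      show gammaSeries p A 0 ≤ _
      rw [gammaSeries_zero]
      refine sup_le (le_trans (Subgroup.commutator_mono le_rfl hA_le)
        (comm_grid_le p hA e he₁ he₂ h1 h2 (by simp) (by simp) (by simp) (by simp)))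
        ((pow_le_grid e p).trans (grid_mono e (by simp) (by simp)))
    refine ⟨G0, ?_⟩
    show gammaSeries p A 1 ≤ grid e (p ^ 1) (p ^ 1)
    rw [gammaSeries_succ]
    have G0' : gammaSeries p A 0 ≤ grid e 1 p := by
      exact le_trans G0 (grid_mono e (one_dvd _) (by rw [zero_add, pow_one]))
    refine sup_le (le_trans (Subgroup.commutator_mono le_rfl G0')
      (comm_grid_le p hA e he₁ he₂ h1 h2 (by simp) (by simp) (by simp) ?_))
      ((pow_le_grid e _).trans (grid_mono e ?_ ?_))
    · rw [pow_one]; exact dvd_mul_right p p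
    · exact pow_dvd_pow p (by omega)
    · exact pow_dvd_pow p (by omega)
  | succ k ih =>
    have Ga : gammaSeries p A (2 * k + 2) ≤ grid e (p ^ (k + 1)) (p ^ (k + 2)) := by
      rw [show (2 * k + 2) = (2 * k + 1) + 1 from rfl, gammaSeries_succ]
      refine sup_le (le_trans (Subgroup.commutator_mono le_rfl ih.2)
        (comm_grid_le p hA e he₁ he₂ h1 h2 (dvd_mul_left _ _) dvd_rfl
          (dvd_of_eq (by ring)) (dvd_of_eq (by ring))))
        ((pow_le_grid e _).trans (grid_mono e (pow_dvd_pow p (by omega))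
          (pow_dvd_pow p (by omega))))
    constructor
    · show gammaSeries p A (2 * k + 2) ≤ grid e (p ^ (k + 1)) (p ^ (k + 2))
      exact Ga
    · show gammaSeries p A (2 * k + 2 + 1) ≤ grid e (p ^ (k + 2)) (p ^ (k + 2))
      rw [gammaSeries_succ]
      refine sup_le (le_trans (Subgroup.commutator_mono le_rfl Ga)
        (comm_grid_le p hA e he₁ he₂ h1 h2 (dvd_of_eq (by ring)) dvd_rfl
          (dvd_of_eq (by ring)) (dvd_mul_left _ _)))
        ((pow_le_grid e _).trans (grid_mono e (pow_dvd_pow p (by omega))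
          (pow_dvd_pow p (by omega))))

end Main

/-- Let `p` be a prime, `B` a group, and `A` a normal subgroup of `B`
isomorphic to `ℤ²` with basis `{e₁, e₂}`.  Suppose `[B,e₁] ⊆ pA` and
`[B,e₂] ⊆ ℤe₁ + pA` (the conjugation action of `B` on `A/pA` is upper unitriangular
with respect to this basis).  Then `Γ^{2k}A ⊆ p^kA` for every `k ≥ 1`, and hence
`⋂_{k ≥ 1} Γ^kA = 1`. -/
theorem stmt_6 (p : ℕ) (hp : p.Prime) (B : Type*) [Group B] (A : Subgroup B)
    (hA : A.Normal) (e : A ≃* Multiplicative (ℤ × ℤ)) (e₁ e₂ : A)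
    (he₁ : e e₁ = Multiplicative.ofAdd ((1, 0) : ℤ × ℤ))
    (he₂ : e e₂ = Multiplicative.ofAdd ((0, 1) : ℤ × ℤ))
    (h1 : ∀ b : B, b * ↑e₁ * b⁻¹ * (↑e₁ : B)⁻¹ ∈ powSubgroup A p)
    (h2 : ∀ b : B, b * ↑e₂ * b⁻¹ * (↑e₂ : B)⁻¹ ∈
      Subgroup.closure {(↑e₁ : B)} ⊔ powSubgroup A p) :
    (∀ k : ℕ, 1 ≤ k → gammaSeries p A (2 * k - 1) ≤ powSubgroup A (p ^ k)) ∧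
      (⨅ k : ℕ, gammaSeries p A k) = ⊥ := by

  have key := gamma_le p hA e he₁ he₂ h1 h2
  constructor
  · intro k hk
    obtain ⟨j, rfl⟩ : ∃ j, k = j + 1 := ⟨k - 1, by omega⟩
    have h2j : 2 * (j + 1) - 1 = 2 * j + 1 := by omega
    rw [h2j]
    exact le_trans (key j).2 (grid_le_pow e (p ^ (j + 1)))
  · rw [eq_bot_iff]
    intro x hx
    have hg : ∀ k : ℕ, x ∈ grid e (p ^ (k + 1)) (p ^ (k + 1)) := fun k =>
      (key k).2 ((iInf_le (fun k => gammaSeries p A k) (2 * k + 1)) hx)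
    obtain ⟨a, rfl, -, -⟩ := hg 0
    have hdvd : ∀ k : ℕ, (p : ℤ) ^ (k + 1) ∣ (co e a).1 ∧
        (p : ℤ) ^ (k + 1) ∣ (co e a).2 := by
      intro k
      have h := coe_mem_grid e (hg k)
      push_cast at h
      exact h
    have hzero : ∀ n : ℤ, (∀ k : ℕ, (p : ℤ) ^ k ∣ n) → n = 0 := by
      intro n hn
      by_contra h0
      have hd : ∀ k : ℕ, p ^ k ∣ n.natAbs := fun k => by
        have := Int.natAbs_dvd_natAbs.mpr (hn k)
        rwa [Int.natAbs_pow, Int.natAbs_natCast] at this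
      have hle := Nat.le_of_dvd (Int.natAbs_pos.2 h0) (hd n.natAbs)
      have hlt := Nat.lt_pow_self (n := n.natAbs) hp.one_lt
      omega
    have c1 : (co e a).1 = 0 :=
      hzero _ (fun k => dvd_trans (pow_dvd_pow _ (Nat.le_succ k)) (hdvd k).1)
    have c2 : (co e a).2 = 0 :=
      hzero _ (fun k => dvd_trans (pow_dvd_pow _ (Nat.le_succ k)) (hdvd k).2)
    have ha : a = 1 := co_inj e (by rw [co_one]; exact Prod.ext c1 c2)
    rw [ha]
    simp
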